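/- Let β ∈ ℝ with β ∉ ℤ, and let φ_β(s,t,x,y) = (s, t, x+β, y). Let L̃ = {(s,t,x,y) ∈ ℝ⁴ : s ∈ ℤ and x − sy ∈ ℤ} (the full preimage in ℝ⁴ of the Lagrangian torus {s = 0, x = 0} of the Kodaira–Thurston manifold). Then ρ_{mnkℓ}(L̃) = L̃ for every (m,n,k,ℓ) ∈ ℤ⁴, and φ_β(L̃) ∩ L̃ = ∅; i.e. φ_β disjoins this Lagrangian torus from itself. -/

import Mathlib

/-- The deck transformation `ρ_{mnkℓ}(s,t,x,y) = (s+m, t+n, x+k+my, y+ℓ)` of ℝ⁴. -/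
def ρ (m n k ℓ : ℤ) (p : Fin 4 → ℝ) : Fin 4 → ℝ :=
  ![p 0 + (m : ℝ), p 1 + (n : ℝ), p 2 + (k : ℝ) + (m : ℝ) * p 3, p 3 + (ℓ : ℝ)]

/-- The map `φ_β(s,t,x,y) = (s, t, x+β, y)`. -/
def φ (β : ℝ) (p : Fin 4 → ℝ) : Fin 4 → ℝ :=
  ![p 0, p 1, p 2 + β, p 3]

/-- The full preimage in ℝ⁴ of the Lagrangian torus `{s = 0, x = 0}` of the
Kodaira–Thurston manifold: `L̃ = {(s,t,x,y) : s ∈ ℤ, x − sy ∈ ℤ}`. -/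
def Ltilde : Set (Fin 4 → ℝ) :=
  {p | (∃ i : ℤ, p 0 = (i : ℝ)) ∧ (∃ j : ℤ, p 2 - p 0 * p 3 = (j : ℝ))}

/-- If `β ∉ ℤ` then `φ_β` disjoins the Lagrangian torus `{s = 0, x = 0}` from itself:
`L̃` is invariant under every deck transformation and `φ_β(L̃) ∩ L̃ = ∅`. -/
theorem stmt8 (β : ℝ) (hβ : β ∉ Set.range ((↑) : ℤ → ℝ)) :
    (∀ m n k ℓ : ℤ, ρ m n k ℓ '' Ltilde = Ltilde) ∧
    (φ β '' Ltilde) ∩ Ltilde = ∅ := by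
  constructor
  · intro m n k ℓ
    ext q
    constructor
    · rintro ⟨p, ⟨⟨i, hi⟩, ⟨j, hj⟩⟩, rfl⟩
      refine ⟨⟨i + m, by simp [ρ, hi]⟩, ⟨j + k - i * ℓ - m * ℓ, ?_⟩⟩
      simp only [ρ]
      push_cast
      try simp only [Matrix.cons_val_zero, Matrix.cons_val_one, Matrix.head_cons,
        Matrix.cons_val_two, Matrix.tail_cons, Matrix.cons_val_three]
      rw [← hj, ← hi]; ring
    · rintro ⟨⟨i, hi⟩, ⟨j, hj⟩⟩
      refine ⟨![q 0 - m, q 1 - n, q 2 - k - m * (q 3 - ℓ), q 3 - ℓ],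
        ⟨⟨i - m, by push_cast; simp [hi]⟩, ⟨j - k + i * ℓ, ?_⟩⟩, ?_⟩
      · push_cast
        try simp only [Matrix.cons_val_zero, Matrix.cons_val_two, Matrix.tail_cons,
          Matrix.head_cons, Matrix.cons_val_three, Matrix.cons_val_one]
        rw [← hj, hi]; ring
      · funext a
        fin_cases a <;> simp [ρ] <;> ring
  · ext q
    simp only [Set.mem_inter_iff, Set.mem_image, Set.mem_empty_iff_false, iff_false]
    rintro ⟨⟨p, ⟨⟨i, hi⟩, ⟨j, hj⟩⟩, rfl⟩, ⟨_, ⟨j', hj'⟩⟩⟩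
    apply hβ
    refine ⟨j' - j, ?_⟩
    have : p 2 + β - p 0 * p 3 = (j' : ℝ) := by simpa [φ] using hj'
    push_cast
    rw [← hj]
    linarith
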